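/- Let G be a group, H a Hilbert space, ξ, η : G → H bounded functions, and u : G → ℂ a function with u(st⁻¹) = ⟨ξ(s), η(t)⟩ for all s,t ∈ G. Then u satisfies Grothendieck's double limit criterion: for any two sequences (s_n) and (t_m) in G, if both iterated limits lim_n lim_m u(s_n t_m) and lim_m lim_n u(s_n t_m) exist, then they are equal. -/

import Mathlib

universe u v

local notation "⟪" x ", " y "⟫" => @inner ℂ _ _ x y

open Filter

/-- Weak ultrafilter limit of a bounded sequence in a Hilbert space, via
Banach–Alaoglu and the Riesz representation theorem. -/
lemma exists_weak_ultrafilter_limit {E : Type*} [NormedAddCommGroup E]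
    [InnerProductSpace ℂ E] [CompleteSpace E] (𝒰 : Ultrafilter ℕ)
    (v : ℕ → E) (C : ℝ) (hv : ∀ n, ‖v n‖ ≤ C) :
    ∃ w : E, ∀ z : E, Tendsto (fun n => ⟪v n, z⟫) (𝒰 : Filter ℕ) (nhds ⟪w, z⟫) := by
  set Φ : ℕ → WeakDual ℂ E := fun n =>
    (InnerProductSpace.toDual ℂ E (v n) : StrongDual ℂ E).toWeakDual with hΦ
  have hS : IsCompact (WeakDual.toStrongDual ⁻¹' Metric.closedBall 0 C) :=
    WeakDual.isCompact_closedBall (𝕜 := ℂ) (E := E) 0 C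
  have hmem : ∀ n, Φ n ∈ WeakDual.toStrongDual ⁻¹' Metric.closedBall 0 C := by
    intro n
    simp only [Set.mem_preimage, Metric.mem_closedBall, dist_zero_right]
    have : ‖(InnerProductSpace.toDual ℂ E (v n) : StrongDual ℂ E)‖ = ‖v n‖ :=
      (InnerProductSpace.toDual ℂ E).norm_map (v n)
    calc ‖WeakDual.toStrongDual (Φ n)‖ = ‖v n‖ := this
      _ ≤ C := hv n
  have hle : (𝒰.map Φ : Filter (WeakDual ℂ E)) ≤
      Filter.principal (WeakDual.toStrongDual ⁻¹' Metric.closedBall 0 C) := by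
    rw [Filter.le_principal_iff]
    exact Filter.mem_map.2 (Filter.univ_mem' hmem)
  obtain ⟨φ, -, hφ⟩ := hS.ultrafilter_le_nhds (𝒰.map Φ) hle
  refine ⟨(InnerProductSpace.toDual ℂ E).symm (WeakDual.toStrongDual φ), fun z => ?_⟩
  have h1 : Tendsto Φ (𝒰 : Filter ℕ) (nhds φ) := hφ
  have h2 := (tendsto_iff_forall_eval_tendsto_topDualPairing.mp h1) z
  have h3 : ∀ n, (topDualPairing ℂ E (Φ n)) z = ⟪v n, z⟫ := fun n => rfl
  have h4 : (topDualPairing ℂ E φ) z =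
      ⟪(InnerProductSpace.toDual ℂ E).symm (WeakDual.toStrongDual φ), z⟫ := by
    rw [← InnerProductSpace.toDual_apply_apply,
      LinearIsometryEquiv.apply_symm_apply]
    rfl
  simpa only [h3, h4] using h2

/-- Let `G` be a group, `H` a Hilbert space, `ξ, η : G → H` bounded,
and `u : G → ℂ` with `u (s t⁻¹) = ⟨ξ s, η t⟩`.  Then `u` satisfies Grothendieck's double
limit criterion: whenever both iterated limits of `u (s n * t m)` exist, they agree. -/
theorem double_limit_criterion {G : Type u} [Group G]
    {H : Type v} [NormedAddCommGroup H] [InnerProductSpace ℂ H]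
    (ξ η : G → H) (A B : ℝ)
    (hξ : ∀ s : G, ‖ξ s‖ ≤ A) (hη : ∀ t : G, ‖η t‖ ≤ B)
    (u : G → ℂ) (hu : ∀ s t : G, u (s * t⁻¹) = ⟪η t, ξ s⟫)
    (s t : ℕ → G) (f g : ℕ → ℂ) (a b : ℂ)
    (hf : ∀ n, Tendsto (fun m => u (s n * t m)) atTop (nhds (f n)))
    (hfa : Tendsto f atTop (nhds a))
    (hg : ∀ m, Tendsto (fun n => u (s n * t m)) atTop (nhds (g m)))
    (hgb : Tendsto g atTop (nhds b)) :
    a = b := by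
  classical
  -- work in the completion of `H`, which is a Hilbert space
  set E := UniformSpace.Completion H
  set x : ℕ → E := fun n => (ξ (s n) : E) with hxdef
  set y : ℕ → E := fun m => (η ((t m)⁻¹) : E) with hydef
  have hux : ∀ n m, u (s n * t m) = ⟪y m, x n⟫ := by
    intro n m
    have := hu (s n) ((t m)⁻¹)
    rw [inv_inv] at this
    rw [this, hxdef, hydef]
    exact (UniformSpace.Completion.inner_coe (𝕜 := ℂ) _ _).symm
  have hxA : ∀ n, ‖x n‖ ≤ A := fun n => by
    rw [hxdef]; rw [UniformSpace.Completion.norm_coe]; exact hξ (s n)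
  have hyB : ∀ m, ‖y m‖ ≤ B := fun m => by
    rw [hydef]; rw [UniformSpace.Completion.norm_coe]; exact hη ((t m)⁻¹)
  -- ultrafilters extending `atTop`
  let 𝒰 : Ultrafilter ℕ := Ultrafilter.of atTop
  have h𝒰 : (𝒰 : Filter ℕ) ≤ atTop := Ultrafilter.of_le atTop
  obtain ⟨X, hX⟩ := exists_weak_ultrafilter_limit 𝒰 x A hxA
  obtain ⟨Y, hY⟩ := exists_weak_ultrafilter_limit 𝒰 y B hyB
  -- Step 1 : `f n = ⟪Y, x n⟫`
  have hfn : ∀ n, f n = ⟪Y, x n⟫ := by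
    intro n
    have h1 : Tendsto (fun m => ⟪y m, x n⟫) (𝒰 : Filter ℕ) (nhds (f n)) := by
      refine Tendsto.mono_left ?_ h𝒰
      simpa only [hux] using hf n
    exact tendsto_nhds_unique h1 (hY (x n))
  -- Step 2 : `a = ⟪Y, X⟫`
  have ha : a = ⟪Y, X⟫ := by
    have h1 : Tendsto f (𝒰 : Filter ℕ) (nhds a) := hfa.mono_left h𝒰
    have h2 : Tendsto (fun n => ⟪Y, x n⟫) (𝒰 : Filter ℕ) (nhds ⟪Y, X⟫) := by
      have := (hX Y).star
      have e : ∀ a b : E, star ⟪a, b⟫ = ⟪b, a⟫ := fun a b => inner_conj_symm b a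
      simpa only [e] using this
    rw [funext hfn] at h1
    exact tendsto_nhds_unique h1 h2
  -- Step 3 : `g m = ⟪y m, X⟫`
  have hgm : ∀ m, g m = ⟪y m, X⟫ := by
    intro m
    have h1 : Tendsto (fun n => ⟪y m, x n⟫) (𝒰 : Filter ℕ) (nhds (g m)) := by
      refine Tendsto.mono_left ?_ h𝒰
      simpa only [hux] using hg m
    have h2 : Tendsto (fun n => ⟪y m, x n⟫) (𝒰 : Filter ℕ) (nhds ⟪y m, X⟫) := by
      have := (hX (y m)).star
      have e : ∀ a b : E, star ⟪a, b⟫ = ⟪b, a⟫ := fun a b => inner_conj_symm b a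
      simpa only [e] using this
    exact tendsto_nhds_unique h1 h2
  -- Step 4 : `b = ⟪Y, X⟫`
  have hb : b = ⟪Y, X⟫ := by
    have h1 : Tendsto g (𝒰 : Filter ℕ) (nhds b) := hgb.mono_left h𝒰
    rw [funext hgm] at h1
    exact tendsto_nhds_unique h1 (hY X)
  rw [ha, hb]
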